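/- arXiv:0904.2519 — 3 statements merged into one kernel-verified Lean document; each statement's English description precedes it below -/
import Mathlib

section
/- Let R be a commutative ring and L a Lie algebra over R equipped with a ℤ-grading: a family of R-submodules (g_i)_{i∈ℤ} forming an internal direct sum decomposition of L with ⁅g_i, g_j⁆ ⊆ g_{i+j} for all i, j. If g_i = ⊥ for all i ≥ 0, then for every natural number n the n-th term of the lower central series of L is contained in the supremum ⨆_{i ≤ -(n+1)} g_i. -/
private lemma bracket_mem_aux {R L : Type*} [CommRing R] [LieRing L] [LieAlgebra R L]
    (g : ℤ → Submodule R L)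
    (hbr : ∀ i j : ℤ, ∀ x ∈ g i, ∀ y ∈ g j, ⁅x, y⁆ ∈ g (i + j))
    (p q : ℤ) {a b : L} (ha : a ∈ ⨆ i ≤ p, g i) (hb : b ∈ ⨆ j ≤ q, g j) :
    ⁅a, b⁆ ∈ ⨆ k ≤ p + q, g k := by
  refine Submodule.iSup_induction (motive := fun a => ⁅a, b⁆ ∈ ⨆ k ≤ p + q, g k) _ ha ?_ (by simp)
    (fun x y hx hy => by rw [add_lie]; exact Submodule.add_mem _ hx hy)
  intro i a hai
  by_cases hi : i ≤ p
  · rw [iSup_pos hi] at hai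
    refine Submodule.iSup_induction (motive := fun b => ⁅a, b⁆ ∈ ⨆ k ≤ p + q, g k) _ hb ?_ (by simp)
      (fun x y hx hy => by rw [lie_add]; exact Submodule.add_mem _ hx hy)
    intro j b hbj
    by_cases hj : j ≤ q
    · rw [iSup_pos hj] at hbj
      exact Submodule.mem_iSup_of_mem (i + j)
        (Submodule.mem_iSup_of_mem (add_le_add hi hj) (hbr i j a hai b hbj))
    · rw [iSup_neg hj] at hbj
      simp [(Submodule.mem_bot R).mp hbj]
  · rw [iSup_neg hi] at hai
    simp [(Submodule.mem_bot R).mp hai]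

private lemma top_le_neg_sup {R L : Type*} [CommRing R] [LieRing L] [LieAlgebra R L]
    (g : ℤ → Submodule R L)
    (hint : DirectSum.IsInternal g)
    (hneg : ∀ i : ℤ, 0 ≤ i → g i = ⊥) :
    (⊤ : Submodule R L) ≤ ⨆ i ≤ (-1 : ℤ), g i := by
  rw [← hint.submodule_iSup_eq_top]
  refine iSup_le fun i => ?_
  by_cases hi : i ≤ -1
  · exact le_iSup_of_le i (le_iSup_of_le hi le_rfl)
  · rw [hneg i (by omega)]; exact bot_le

/-- For a Lie algebra graded in negative degrees (like the symbol algebra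
`gr(T_xM)` of a filtered manifold), the `n`-th term of the lower central series is
contained in the sum of the graded pieces of degree `≤ -(n+1)`. -/
theorem lowerCentralSeries_le_of_neg_graded
    {R L : Type*} [CommRing R] [LieRing L] [LieAlgebra R L]
    (g : ℤ → Submodule R L)
    (hint : DirectSum.IsInternal g)
    (hbr : ∀ i j : ℤ, ∀ x ∈ g i, ∀ y ∈ g j, ⁅x, y⁆ ∈ g (i + j))
    (hneg : ∀ i : ℤ, 0 ≤ i → g i = ⊥)
    (n : ℕ) :
    (LieModule.lowerCentralSeries R L L n : Submodule R L) ≤ ⨆ i ≤ -((n : ℤ) + 1), g i := by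
  induction n with
  | zero =>
    simpa using top_le_neg_sup g hint hneg
  | succ n ih =>
    rw [LieModule.lowerCentralSeries_succ, LieIdeal.toLieSubalgebra_toSubmodule,
      LieSubmodule.lieIdeal_oper_eq_linear_span', Submodule.span_le]
    rintro _ ⟨x, -, m, hm, rfl⟩
    have hx : x ∈ ⨆ i ≤ (-1 : ℤ), g i := top_le_neg_sup g hint hneg trivial
    have hm' : m ∈ ⨆ j ≤ -((n : ℤ) + 1), g j := by
      refine ih ?_
      rwa [LieIdeal.toLieSubalgebra_toSubmodule]
    have h2 : -1 + -((n : ℤ) + 1) = -((↑(n + 1) : ℤ) + 1) := by push_cast; ring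
    have := bracket_mem_aux g hbr (-1) (-((n : ℤ) + 1)) hx hm'
    rw [h2] at this
    exact this
end

section
/- Let R be a commutative ring and L a Lie algebra over R equipped with a ℤ-grading (g_i)_{i∈ℤ} with g_i = ⊥ for all i ≥ 0. Define R-submodules h_i of L recursively downward by h_{-1} = g_{-1} and h_{i-1} = the submodule spanned by all brackets ⁅x, y⁆ with x ∈ g_{-1} and y ∈ h_i, for i ≤ -1. Then ⁅h_i, h_j⁆ ⊆ h_{i+j} for all i, j ≤ -1; in particular the direct sum of the h_i is a Lie subalgebra of L containing g_{-1}. -/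
/-- For a Lie algebra graded in negative degrees, the submodules `h_i` generated
downward from `h_{-1} = g_{-1}` by iterated brackets with `g_{-1}` satisfy
`⁅h_i, h_j⁆ ⊆ h_{i+j}`; in particular their sum is a Lie subalgebra of `L`
containing `g_{-1}`. -/
theorem bracket_of_generated_pieces
    {R L : Type*} [CommRing R] [LieRing L] [LieAlgebra R L]
    (g : ℤ → Submodule R L)
    (hint : DirectSum.IsInternal g)
    (hbr : ∀ i j : ℤ, ∀ x ∈ g i, ∀ y ∈ g j, ⁅x, y⁆ ∈ g (i + j))
    (hneg : ∀ i : ℤ, 0 ≤ i → g i = ⊥)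
    (h : ℤ → Submodule R L)
    (h1 : h (-1) = g (-1))
    (hrec : ∀ i : ℤ, i ≤ -1 →
      h (i - 1) = Submodule.span R {z : L | ∃ x ∈ g (-1), ∃ y ∈ h i, z = ⁅x, y⁆}) :
    (∀ i : ℤ, i ≤ -1 → ∀ j : ℤ, j ≤ -1 →
        ∀ x ∈ h i, ∀ y ∈ h j, ⁅x, y⁆ ∈ h (i + j)) ∧
      ∃ K : LieSubalgebra R L,
        (K.toSubmodule = ⨆ i ≤ (-1 : ℤ), h i) ∧ g (-1) ≤ K.toSubmodule := by
  have base : ∀ j : ℤ, j ≤ -1 → ∀ x ∈ h (-1), ∀ y ∈ h j, ⁅x, y⁆ ∈ h (-1 + j) := by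
    intro j hj x hx y hy
    have e : (-1 : ℤ) + j = j - 1 := by ring
    rw [e, hrec j hj]
    exact Submodule.subset_span ⟨x, by rwa [h1] at hx, y, hy, rfl⟩
  have key : ∀ i : ℤ, i ≤ -1 →
      ∀ x ∈ h i, ∀ j : ℤ, j ≤ -1 → ∀ y ∈ h j, ⁅x, y⁆ ∈ h (i + j) := by
    suffices H : ∀ n : ℕ, ∀ x ∈ h (-1 - (n : ℤ)), ∀ j : ℤ, j ≤ -1 →
        ∀ y ∈ h j, ⁅x, y⁆ ∈ h (-1 - (n : ℤ) + j) by
      intro i hi x hx j hj y hy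
      obtain ⟨n, hn⟩ := Int.le.dest hi
      have hi' : i = -1 - (n : ℤ) := by omega
      subst hi'
      exact H n x hx j hj y hy
    intro n
    induction n with
    | zero =>
      intro x hx j hj y hy
      simp only [Nat.cast_zero, sub_zero] at hx ⊢
      exact base j hj x hx y hy
    | succ n ih =>
      have e : (-1 : ℤ) - ((n + 1 : ℕ) : ℤ) = (-1 - (n : ℤ)) - 1 := by push_cast; ring
      rw [e]
      intro x hx j hj y hy
      rw [hrec _ (by omega : (-1 : ℤ) - (n : ℤ) ≤ -1)] at hx
      induction hx using Submodule.span_induction with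
      | mem z hz =>
        obtain ⟨a, ha, b, hb, rfl⟩ := hz
        have ha' : a ∈ h (-1) := by rwa [h1]
        have t1 : ⁅a, ⁅b, y⁆⁆ ∈ h (-1 + (-1 - (n : ℤ) + j)) :=
          base _ (by omega) a ha' _ (ih b hb j hj y hy)
        have t2 : ⁅b, ⁅a, y⁆⁆ ∈ h (-1 - (n : ℤ) + (-1 + j)) :=
          ih b hb _ (by omega) _ (base j hj a ha' y hy)
        have e' : ⁅(⁅a, b⁆ : L), y⁆ = ⁅a, ⁅b, y⁆⁆ - ⁅b, ⁅a, y⁆⁆ := by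
          rw [lie_lie]
        rw [e']
        have e1 : (-1 : ℤ) + (-1 - (n : ℤ) + j) = -1 - (n : ℤ) - 1 + j := by ring
        have e2 : (-1 : ℤ) - (n : ℤ) + (-1 + j) = -1 - (n : ℤ) - 1 + j := by ring
        exact Submodule.sub_mem _ (e1 ▸ t1) (e2 ▸ t2)
      | zero => rw [zero_lie]; exact Submodule.zero_mem _
      | add u v _ _ hu hv => rw [add_lie]; exact Submodule.add_mem _ hu hv
      | smul r u _ hu => rw [smul_lie]; exact Submodule.smul_mem _ r hu
  refine ⟨fun i hi j hj x hx y hy => key i hi x hx j hj y hy, ?_⟩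
  set S : Submodule R L := ⨆ i ≤ (-1 : ℤ), h i with hS
  have hle : ∀ i : ℤ, i ≤ -1 → h i ≤ S := by
    intro i hi
    exact le_iSup_of_le i (le_iSup_of_le hi le_rfl)
  have hS' : S = ⨆ i : {i : ℤ // i ≤ -1}, h i := by
    rw [hS, iSup_subtype]
  have hlie : ∀ x ∈ S, ∀ y ∈ S, ⁅x, y⁆ ∈ S := by
    have inner : ∀ i : ℤ, i ≤ -1 → ∀ a ∈ h i, ∀ y ∈ S, ⁅a, y⁆ ∈ S := by
      intro i hi a ha y hy
      rw [hS'] at hy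
      exact Submodule.iSup_induction (motive := fun y => ⁅a, y⁆ ∈ S) _ hy
        (fun j b hb => hle _ (by omega : i + j.1 ≤ -1) (key i hi a ha j.1 j.2 b hb))
        (show ⁅a, (0:L)⁆ ∈ S by rw [lie_zero]; exact S.zero_mem)
        (fun u v hu hv => show ⁅a, u + v⁆ ∈ S by rw [lie_add]; exact S.add_mem hu hv)
    intro x hx y hy
    rw [hS'] at hx
    exact Submodule.iSup_induction (motive := fun x => ⁅x, y⁆ ∈ S) _ hx
      (fun i b hb => inner i.1 i.2 b hb y hy)
      (show ⁅(0:L), y⁆ ∈ S by rw [zero_lie]; exact S.zero_mem)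
      (fun u v hu hv => show ⁅u + v, y⁆ ∈ S by rw [add_lie]; exact S.add_mem hu hv)
  refine ⟨{ toSubmodule := S, lie_mem' := fun {x y} hx hy => hlie x hx y hy }, rfl, ?_⟩
  rw [← h1]
  exact hle (-1) le_rfl
end

section
/- Let U ⊆ ℝⁿ be an open connected set, x₀ ∈ U, and let A : U → (ℝⁿ →L[ℝ] (ℝᵐ →L[ℝ] ℝᵐ)) be continuous. The set S of maps s : U → ℝᵐ that are differentiable with continuous derivative on U and satisfy fderiv ℝ s x v = A x v (s x) for all x ∈ U and v ∈ ℝⁿ is an ℝ-linear subspace of the space of maps U → ℝᵐ, the evaluation map S → ℝᵐ, s ↦ s x₀, is injective ℝ-linear, and consequently S is a finite-dimensional real vector space of dimension at most m. (This is the paper's conclusion that the solution space of a regular linear system of differential equations of weighted finite type on a filtered manifold is always finite dimensional, established in the local coordinate model after the system is canonically rewritten as a first-order system with injective weighted symbol.) -/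
open Metric Set

private lemma local_vanish {n m : ℕ} {U : Set (EuclideanSpace ℝ (Fin n))}
    (hUopen : IsOpen U)
    {A : EuclideanSpace ℝ (Fin n) →
      (EuclideanSpace ℝ (Fin n) →L[ℝ] (EuclideanSpace ℝ (Fin m) →L[ℝ] EuclideanSpace ℝ (Fin m)))}
    (hA : ContinuousOn A U)
    {s : EuclideanSpace ℝ (Fin n) → EuclideanSpace ℝ (Fin m)}
    (hdiff : ∀ x ∈ U, DifferentiableAt ℝ s x)
    (heq : ∀ x ∈ U, ∀ v, fderiv ℝ s x v = A x v (s x))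
    {x : EuclideanSpace ℝ (Fin n)} (hx : x ∈ U) (hsx : s x = 0) :
    ∃ ε > 0, ball x ε ⊆ U ∧ ∀ y ∈ ball x ε, s y = 0 := by
  obtain ⟨δ, hδ, hδU⟩ := Metric.isOpen_iff.mp hUopen x hx
  refine ⟨δ/2, by linarith, fun y hy => hδU (ball_subset_ball (by linarith) hy), ?_⟩
  have hcb : closedBall x (δ/2) ⊆ U :=
    (closedBall_subset_ball (by linarith)).trans hδU
  obtain ⟨C, hC⟩ := (isCompact_closedBall x (δ/2)).exists_bound_of_continuousOn (f := A) (hA.mono hcb)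
  intro y hy
  set γ : ℝ → EuclideanSpace ℝ (Fin n) := fun t => x + t • (y - x) with hγ
  have hγmem : ∀ t ∈ Icc (0:ℝ) 1, γ t ∈ closedBall x (δ/2) := by
    intro t ht
    rw [mem_closedBall_iff_norm]
    have h' : γ t - x = t • (y - x) := by simp [hγ]
    rw [h', norm_smul, Real.norm_eq_abs, abs_of_nonneg ht.1]
    calc t * ‖y - x‖ ≤ 1 * ‖y - x‖ :=
          mul_le_mul_of_nonneg_right ht.2 (norm_nonneg _)
      _ = ‖y - x‖ := one_mul _
      _ ≤ δ/2 := le_of_lt (by rwa [← mem_ball_iff_norm])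
  have hγU : ∀ t ∈ Icc (0:ℝ) 1, γ t ∈ U := fun t ht => hcb (hγmem t ht)
  set g : ℝ → EuclideanSpace ℝ (Fin m) := fun t => s (γ t) with hgdef
  have hγderiv : ∀ t : ℝ, HasDerivAt γ (y - x) t := by
    intro t
    simpa [hγ] using ((hasDerivAt_id t).smul_const (y - x)).const_add x
  have hg : ∀ t ∈ Icc (0:ℝ) 1, HasDerivAt g (fderiv ℝ s (γ t) (y - x)) t := by
    intro t ht
    exact ((hdiff _ (hγU t ht)).hasFDerivAt).comp_hasDerivAt t (hγderiv t)
  set K : ℝ := C * ‖y - x‖ with hK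
  have hbound : ∀ t ∈ Ico (0:ℝ) 1, ‖fderiv ℝ s (γ t) (y - x)‖ ≤ K * ‖g t‖ + 0 := by
    intro t ht
    have htI : t ∈ Icc (0:ℝ) 1 := ⟨ht.1, le_of_lt ht.2⟩
    rw [heq _ (hγU t htI), add_zero]
    calc ‖A (γ t) (y - x) (g t)‖ ≤ ‖A (γ t) (y - x)‖ * ‖g t‖ :=
          ContinuousLinearMap.le_opNorm _ _
      _ ≤ (‖A (γ t)‖ * ‖y - x‖) * ‖g t‖ :=
          mul_le_mul_of_nonneg_right (ContinuousLinearMap.le_opNorm _ _) (norm_nonneg _)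
      _ ≤ K * ‖g t‖ := by
          apply mul_le_mul_of_nonneg_right _ (norm_nonneg _)
          apply mul_le_mul_of_nonneg_right _ (norm_nonneg _)
          exact hC _ (hγmem t htI)
  have hcont : ContinuousOn g (Icc (0:ℝ) 1) :=
    fun t ht => ((hg t ht).continuousAt).continuousWithinAt
  have hga : ‖g 0‖ ≤ 0 := by
    simp [hgdef, hγ, hsx]
  have hb := norm_le_gronwallBound_of_norm_deriv_right_le hcont
    (fun t ht => (hg t ⟨ht.1, le_of_lt ht.2⟩).hasDerivWithinAt) hga hbound
    1 ⟨zero_le_one, le_refl 1⟩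
  rw [gronwallBound_ε0_δ0] at hb
  have hg1 : g 1 = s y := by simp [hgdef, hγ]
  have hb' : ‖s y‖ ≤ 0 := by rwa [hg1] at hb
  exact norm_le_zero_iff.mp hb'

/-- Uniqueness: a solution vanishing at `x₀` vanishes on all of `U`. -/
private lemma global_vanish {n m : ℕ} {U : Set (EuclideanSpace ℝ (Fin n))}
    (hUopen : IsOpen U) (hUconn : IsConnected U)
    {x₀ : EuclideanSpace ℝ (Fin n)} (hx₀ : x₀ ∈ U)
    {A : EuclideanSpace ℝ (Fin n) →
      (EuclideanSpace ℝ (Fin n) →L[ℝ] (EuclideanSpace ℝ (Fin m) →L[ℝ] EuclideanSpace ℝ (Fin m)))}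
    (hA : ContinuousOn A U)
    {s : EuclideanSpace ℝ (Fin n) → EuclideanSpace ℝ (Fin m)}
    (hdiff : ∀ x ∈ U, DifferentiableAt ℝ s x)
    (heq : ∀ x ∈ U, ∀ v, fderiv ℝ s x v = A x v (s x))
    (h0 : s x₀ = 0) : ∀ x ∈ U, s x = 0 := by
  -- Z is open
  set Z : Set (EuclideanSpace ℝ (Fin n)) := {x | x ∈ U ∧ s x = 0} with hZ
  have hZopen : IsOpen Z := by
    rw [Metric.isOpen_iff]
    rintro x ⟨hxU, hsx⟩
    obtain ⟨ε, hε, hbU, hzero⟩ := local_vanish hUopen hA hdiff heq hxU hsx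
    exact ⟨ε, hε, fun y hy => ⟨hbU hy, hzero y hy⟩⟩
  have hscont : ContinuousOn s U := fun x hx =>
    ((hdiff x hx).continuousAt).continuousWithinAt
  have hWopen : IsOpen (U ∩ s ⁻¹' ({0}ᶜ)) :=
    hscont.isOpen_inter_preimage hUopen isClosed_singleton.isOpen_compl
  by_contra h
  push_neg at h
  obtain ⟨x₁, hx₁U, hx₁⟩ := h
  have hsub : U ⊆ Z ∪ (U ∩ s ⁻¹' ({0}ᶜ)) := by
    intro x hx
    by_cases hs : s x = 0
    · exact Or.inl ⟨hx, hs⟩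
    · exact Or.inr ⟨hx, hs⟩
  have h1 : (U ∩ Z).Nonempty := ⟨x₀, hx₀, hx₀, h0⟩
  have h2 : (U ∩ (U ∩ s ⁻¹' ({0}ᶜ))).Nonempty := ⟨x₁, hx₁U, hx₁U, hx₁⟩
  obtain ⟨z, hzU, hz1, hz2⟩ := hUconn.isPreconnected Z _ hZopen hWopen hsub h1 h2
  exact hz2.2 hz1.2

/-- The space of C¹ solutions on an open connected set `U` of a first-order linear
system `fderiv ℝ s x v = A x v (s x)` (the local model of a weighted order one system
with injective weighted symbol, to which any regular system of weighted finite type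
on a filtered manifold is canonically rewritten) is a linear subspace of the maps
`U → ℝᵐ`, evaluation at `x₀ ∈ U` is an injective linear map on it, and hence it is
finite dimensional of dimension at most `m`. -/
theorem solutionSpace_finiteDimensional
    {n m : ℕ} {U : Set (EuclideanSpace ℝ (Fin n))}
    (hUopen : IsOpen U) (hUconn : IsConnected U)
    {x₀ : EuclideanSpace ℝ (Fin n)} (hx₀ : x₀ ∈ U)
    (A : EuclideanSpace ℝ (Fin n) →
      (EuclideanSpace ℝ (Fin n) →L[ℝ] (EuclideanSpace ℝ (Fin m) →L[ℝ] EuclideanSpace ℝ (Fin m))))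
    (hA : ContinuousOn A U) :
    ∃ S : Submodule ℝ (↥U → EuclideanSpace ℝ (Fin m)),
      (S : Set (↥U → EuclideanSpace ℝ (Fin m))) =
        {t | ∃ s : EuclideanSpace ℝ (Fin n) → EuclideanSpace ℝ (Fin m),
          (∀ x ∈ U, DifferentiableAt ℝ s x) ∧
          ContinuousOn (fun x => fderiv ℝ s x) U ∧
          (∀ x ∈ U, ∀ v, fderiv ℝ s x v = A x v (s x)) ∧
          t = fun u : ↥U => s u} ∧
      (∃ ev : S →ₗ[ℝ] EuclideanSpace ℝ (Fin m),
        (∀ t : S, ev t = (t : ↥U → EuclideanSpace ℝ (Fin m)) ⟨x₀, hx₀⟩) ∧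
        Function.Injective ev) ∧
      FiniteDimensional ℝ S ∧ Module.finrank ℝ S ≤ m := by
  set C : Set (↥U → EuclideanSpace ℝ (Fin m)) :=
    {t | ∃ s : EuclideanSpace ℝ (Fin n) → EuclideanSpace ℝ (Fin m),
      (∀ x ∈ U, DifferentiableAt ℝ s x) ∧
      ContinuousOn (fun x => fderiv ℝ s x) U ∧
      (∀ x ∈ U, ∀ v, fderiv ℝ s x v = A x v (s x)) ∧
      t = fun u : ↥U => s u} with hC
  have hzero : (0 : ↥U → EuclideanSpace ℝ (Fin m)) ∈ C := by
    refine ⟨fun _ => 0, fun x _ => differentiableAt_const 0, ?_, ?_, rfl⟩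
    · have : (fun x => fderiv ℝ (fun _ : EuclideanSpace ℝ (Fin n) =>
        (0 : EuclideanSpace ℝ (Fin m))) x) = fun _ => 0 := by
        funext x; exact fderiv_const_apply 0
      rw [this]; exact continuousOn_const
    · intro x _ v
      rw [fderiv_const_apply 0]
      simp
  have hadd : ∀ t₁ t₂, t₁ ∈ C → t₂ ∈ C → t₁ + t₂ ∈ C := by
    rintro t₁ t₂ ⟨s₁, hd₁, hc₁, he₁, rfl⟩ ⟨s₂, hd₂, hc₂, he₂, rfl⟩
    refine ⟨fun x => s₁ x + s₂ x, fun x hx => (hd₁ x hx).add (hd₂ x hx), ?_, ?_, rfl⟩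
    · apply ContinuousOn.congr (f := fun x => fderiv ℝ s₁ x + fderiv ℝ s₂ x)
        (hc₁.add hc₂)
      intro x hx
      exact fderiv_add (hd₁ x hx) (hd₂ x hx)
    · intro x hx v
      rw [fderiv_fun_add (hd₁ x hx) (hd₂ x hx)]
      simp [he₁ x hx v, he₂ x hx v]
  have hsmul : ∀ (c : ℝ) t, t ∈ C → c • t ∈ C := by
    rintro c t ⟨s, hd, hc, he, rfl⟩
    refine ⟨fun x => c • s x, fun x hx => (hd x hx).const_smul c, ?_, ?_, rfl⟩
    · apply ContinuousOn.congr (f := fun x => c • fderiv ℝ s x) (hc.const_smul c)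
      intro x hx
      exact fderiv_const_smul (hd x hx) c
    · intro x hx v
      rw [fderiv_fun_const_smul (hd x hx) c]
      simp [he x hx v]
  set S : Submodule ℝ (↥U → EuclideanSpace ℝ (Fin m)) :=
    { carrier := C
      add_mem' := fun h₁ h₂ => hadd _ _ h₁ h₂
      zero_mem' := hzero
      smul_mem' := fun c t h => hsmul c t h } with hS
  have hSC : (S : Set (↥U → EuclideanSpace ℝ (Fin m))) = C := rfl
  set ev : S →ₗ[ℝ] EuclideanSpace ℝ (Fin m) :=
    (LinearMap.proj (⟨x₀, hx₀⟩ : ↥U)).comp S.subtype with hev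
  have hevapply : ∀ t : S, ev t = (t : ↥U → EuclideanSpace ℝ (Fin m)) ⟨x₀, hx₀⟩ :=
    fun t => rfl
  have hinj : Function.Injective ev := by
    rw [← LinearMap.ker_eq_bot, LinearMap.ker_eq_bot']
    rintro ⟨t, ht⟩ hev0
    obtain ⟨s, hd, hc, he, rfl⟩ := ht
    have hs0 : s x₀ = 0 := hev0
    have heq : ∀ x ∈ U, ∀ v, fderiv ℝ s x v = A x v (s x) := he
    have := global_vanish hUopen hUconn hx₀ hA hd heq hs0
    apply Subtype.ext
    funext u
    exact this u u.2
  have hfd : FiniteDimensional ℝ S := FiniteDimensional.of_injective ev hinj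
  refine ⟨S, hSC, ⟨ev, hevapply, hinj⟩, hfd, ?_⟩
  calc Module.finrank ℝ S ≤ Module.finrank ℝ (EuclideanSpace ℝ (Fin m)) :=
        LinearMap.finrank_le_finrank_of_injective hinj
    _ = m := finrank_euclideanSpace_fin
end
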